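/- Maximum principle for the two-dimensional operator with transmission conditions: suppose (u₋, u₊) belongs to D(𝒜) and let M = max( sup_{[r,1]×ℝ} u₋, sup_{[1,R]×ℝ} u₊ ). If (ρ₀, φ₀) ∈ [r,1] × ℝ and u₋(ρ₀, φ₀) = M, then κ ( ∂²u₋/∂ρ²(ρ₀,φ₀) + ρ₀⁻¹ ∂u₋/∂ρ(ρ₀,φ₀) + ρ₀⁻² ∂²u₋/∂φ²(ρ₀,φ₀) ) ≤ 0; and if (ρ₀, φ₀) ∈ [1,R] × ℝ and u₊(ρ₀, φ₀) = M, then ∂²u₊/∂ρ²(ρ₀,φ₀) + ρ₀⁻¹ ∂u₊/∂ρ(ρ₀,φ₀) + ρ₀⁻² ∂²u₊/∂φ²(ρ₀,φ₀) ≤ 0. -/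

import Mathlib

open Set Filter Topology

/-- Partial derivative in the radial variable (one-sided on `[a,b]`). -/
noncomputable def pdR (a b : ℝ) (u : ℝ → ℝ → ℝ) (ρ φ : ℝ) : ℝ :=
  derivWithin (fun s => u s φ) (Set.Icc a b) ρ

/-- Second partial derivative in the radial variable (one-sided on `[a,b]`). -/
noncomputable def pdRR (a b : ℝ) (u : ℝ → ℝ → ℝ) (ρ φ : ℝ) : ℝ :=
  derivWithin (fun s => pdR a b u s φ) (Set.Icc a b) ρ

/-- Second partial derivative in the angular variable. -/
noncomputable def pdPP (u : ℝ → ℝ → ℝ) (ρ φ : ℝ) : ℝ :=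
  deriv (deriv (u ρ)) φ

/-- One-sided derivative at a left endpoint maximum is nonpositive. -/
lemma mp_derivWithin_nonpos_left {a b : ℝ} (hab : a < b) {g : ℝ → ℝ}
    (hg : DifferentiableWithinAt ℝ g (Icc a b) a)
    (hmax : ∀ y ∈ Icc a b, g y ≤ g a) :
    derivWithin g (Icc a b) a ≤ 0 := by
  have hd := hg.hasDerivWithinAt
  rw [hasDerivWithinAt_iff_tendsto_slope, Icc_diff_left] at hd
  have hne : (𝓝[Ioc a b] a).NeBot := by
    rw [nhdsWithin_Ioc_eq_nhdsGT hab]; infer_instance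
  refine le_of_tendsto hd ?_
  filter_upwards [self_mem_nhdsWithin] with s hs
  rw [slope_def_field]
  exact div_nonpos_of_nonpos_of_nonneg
    (sub_nonpos.2 (hmax s ⟨hs.1.le, hs.2⟩)) (sub_nonneg.2 hs.1.le)

/-- One-sided derivative at a right endpoint maximum is nonnegative. -/
lemma mp_derivWithin_nonneg_right {a b : ℝ} (hab : a < b) {g : ℝ → ℝ}
    (hg : DifferentiableWithinAt ℝ g (Icc a b) b)
    (hmax : ∀ y ∈ Icc a b, g y ≤ g b) :
    0 ≤ derivWithin g (Icc a b) b := by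
  have hd := hg.hasDerivWithinAt
  rw [hasDerivWithinAt_iff_tendsto_slope, Icc_sdiff_right] at hd
  have hne : (𝓝[Ico a b] b).NeBot := by
    rw [nhdsWithin_Ico_eq_nhdsLT hab]; infer_instance
  refine ge_of_tendsto hd ?_
  filter_upwards [self_mem_nhdsWithin] with s hs
  rw [slope_def_field]
  exact div_nonneg_iff.2 (Or.inr ⟨sub_nonpos.2 (hmax s ⟨hs.1, hs.2.le⟩), sub_nonpos.2 hs.2.le⟩)

/-- The first `derivWithin` vanishes at a maximum, given one-sided information at endpoints. -/
lemma mp_first_deriv_zero {a b : ℝ} (hab : a < b) {g : ℝ → ℝ}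
    (hg : ContDiffOn ℝ 2 g (Icc a b)) {x : ℝ} (hx : x ∈ Icc a b)
    (hmax : ∀ y ∈ Icc a b, g y ≤ g x)
    (hleft : x = a → 0 ≤ derivWithin g (Icc a b) x)
    (hright : x = b → derivWithin g (Icc a b) x ≤ 0) :
    derivWithin g (Icc a b) x = 0 := by
  have hdiff : DifferentiableOn ℝ g (Icc a b) := hg.differentiableOn (by norm_num)
  rcases eq_or_lt_of_le hx.1 with hxa | hxa
  · exact le_antisymm (hxa ▸ mp_derivWithin_nonpos_left hab (hdiff a (hxa ▸ hx))
      (hxa ▸ hmax)) (hleft hxa.symm)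
  rcases eq_or_lt_of_le hx.2 with hxb | hxb
  · exact le_antisymm (hright hxb) (hxb ▸ mp_derivWithin_nonneg_right hab
      (hdiff b (hxb ▸ hx)) (hxb ▸ hmax))
  · have hmem : Icc a b ∈ 𝓝 x := Icc_mem_nhds hxa hxb
    rw [derivWithin_of_mem_nhds hmem]
    refine IsLocalMax.deriv_eq_zero ?_
    filter_upwards [hmem] with y hy using hmax y hy

/-- Second `derivWithin` at a maximum with vanishing first derivative is nonpositive. -/
lemma mp_second_deriv_nonpos {a b : ℝ} (hab : a < b) {g : ℝ → ℝ}
    (hg : ContDiffOn ℝ 2 g (Icc a b)) {x : ℝ} (hx : x ∈ Icc a b)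
    (hmax : ∀ y ∈ Icc a b, g y ≤ g x)
    (hd : derivWithin g (Icc a b) x = 0) :
    derivWithin (fun s => derivWithin g (Icc a b) s) (Icc a b) x ≤ 0 := by
  set g1 := fun s => derivWithin g (Icc a b) s with hg1def
  have hg1' : ContDiffOn ℝ 1 g1 (Icc a b) :=
    hg.derivWithin (uniqueDiffOn_Icc hab) (by norm_num)
  have hg1 : DifferentiableOn ℝ g1 (Icc a b) := hg1'.differentiableOn (by norm_num)
  by_contra hcon
  push_neg at hcon
  have hdL : HasDerivWithinAt g1 (derivWithin g1 (Icc a b) x) (Icc a b) x :=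
    (hg1 x hx).hasDerivWithinAt
  have hx0 : g1 x = 0 := hd
  rcases lt_or_eq_of_le hx.2 with hxb | hxb
  · -- x < b : approach from the right
    have hsub : Ioc x b ⊆ Icc a b \ {x} := fun s hs =>
      ⟨⟨le_trans hx.1 hs.1.le, hs.2⟩, ne_of_gt hs.1⟩
    have hT : Tendsto (slope g1 x) (𝓝[>] x) (𝓝 (derivWithin g1 (Icc a b) x)) := by
      have := (hasDerivWithinAt_iff_tendsto_slope.1 hdL).mono_left (nhdsWithin_mono _ hsub)
      rwa [nhdsWithin_Ioc_eq_nhdsGT hxb] at this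
    have hev : ∀ᶠ s in 𝓝[>] x, 0 < slope g1 x s ∧ s ∈ Ioc x b := by
      refine (hT.eventually (eventually_gt_nhds hcon)).and ?_
      rw [← nhdsWithin_Ioc_eq_nhdsGT hxb]; exact self_mem_nhdsWithin
    obtain ⟨u, hu, hsub2⟩ := mem_nhdsGT_iff_exists_Ioc_subset.1 hev
    have hu : x < u := hu
    have hub : u ≤ b := (hsub2 ⟨hu, le_refl u⟩).2.2
    have hpos : ∀ s ∈ Ioc x u, 0 < g1 s := by
      intro s hs
      have h1 := (hsub2 hs).1
      rw [slope_def_field, hx0, sub_zero] at h1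
      have h2 : (0:ℝ) < s - x := sub_pos.2 hs.1
      have h3 := mul_pos h1 h2
      rwa [div_mul_cancel₀ _ (ne_of_gt h2)] at h3
    have hmono : StrictMonoOn g (Icc x u) := by
      refine strictMonoOn_of_deriv_pos (convex_Icc x u)
        (hg.continuousOn.mono (Icc_subset_Icc hx.1 hub)) ?_
      intro s hs
      rw [interior_Icc] at hs
      have hmem : Icc a b ∈ 𝓝 s :=
        Icc_mem_nhds (lt_of_le_of_lt hx.1 hs.1) (lt_of_lt_of_le hs.2 hub)
      rw [← derivWithin_of_mem_nhds hmem]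
      exact hpos s ⟨hs.1, hs.2.le⟩
    have hlt : g x < g u :=
      hmono (left_mem_Icc.2 hu.le) (right_mem_Icc.2 hu.le) hu
    exact absurd (hmax u ⟨le_trans hx.1 hu.le, hub⟩) (not_le.2 hlt)
  · -- x = b : approach from the left
    have hax : a < x := by rw [hxb]; exact hab
    have hsub : Ico a x ⊆ Icc a b \ {x} := fun s hs =>
      ⟨⟨hs.1, le_of_lt (lt_of_lt_of_le hs.2 (le_of_eq hxb))⟩, ne_of_lt hs.2⟩
    have hT : Tendsto (slope g1 x) (𝓝[<] x) (𝓝 (derivWithin g1 (Icc a b) x)) := by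
      have := (hasDerivWithinAt_iff_tendsto_slope.1 hdL).mono_left (nhdsWithin_mono _ hsub)
      rwa [nhdsWithin_Ico_eq_nhdsLT hax] at this
    have hev : ∀ᶠ s in 𝓝[<] x, 0 < slope g1 x s ∧ s ∈ Ico a x := by
      refine (hT.eventually (eventually_gt_nhds hcon)).and ?_
      rw [← nhdsWithin_Ico_eq_nhdsLT hax]; exact self_mem_nhdsWithin
    obtain ⟨u, hu, hsub2⟩ := mem_nhdsLT_iff_exists_Ico_subset.1 hev
    have hu : u < x := hu
    have hau : a ≤ u := (hsub2 ⟨le_refl u, hu⟩).2.1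
    have hneg : ∀ s ∈ Ico u x, g1 s < 0 := by
      intro s hs
      have h1 := (hsub2 hs).1
      rw [slope_def_field, hx0, sub_zero] at h1
      have h2 : s - x < 0 := sub_neg.2 hs.2
      rcases div_pos_iff.1 h1 with ⟨_, h⟩ | ⟨h, _⟩
      · exact absurd h (not_lt.2 h2.le)
      · exact h
    have hanti : StrictAntiOn g (Icc u x) := by
      refine strictAntiOn_of_deriv_neg (convex_Icc u x)
        (hg.continuousOn.mono (Icc_subset_Icc hau hx.2)) ?_
      intro s hs
      rw [interior_Icc] at hs
      have hmem : Icc a b ∈ 𝓝 s :=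
        Icc_mem_nhds (lt_of_le_of_lt hau hs.1) (lt_of_lt_of_le hs.2 hx.2)
      rw [← derivWithin_of_mem_nhds hmem]
      exact hneg s ⟨hs.1.le, hs.2⟩
    have hlt : g x < g u :=
      hanti (left_mem_Icc.2 hu.le) (right_mem_Icc.2 hu.le) hu
    exact absurd (hmax u ⟨hau, le_trans hu.le hx.2⟩) (not_le.2 hlt)

/-- Second derivative test on the whole line at a global maximum. -/
lemma mp_second_deriv_nonpos_univ {h : ℝ → ℝ} (hh : ContDiff ℝ 2 h) {x : ℝ}
    (hmax : ∀ y, h y ≤ h x) : deriv (deriv h) x ≤ 0 := by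
  set I := Icc (x - 1) (x + 1) with hIdef
  have hab : x - 1 < x + 1 := by linarith
  have hI : I ∈ 𝓝 x := Icc_mem_nhds (by linarith) (by linarith)
  have hxI : x ∈ I := ⟨by linarith, by linarith⟩
  have hd0 : deriv h x = 0 :=
    IsLocalMax.deriv_eq_zero (Filter.Eventually.of_forall hmax)
  have hkey := mp_second_deriv_nonpos hab (hh.contDiffOn) hxI (fun y _ => hmax y)
    (by rw [derivWithin_of_mem_nhds hI]; exact hd0)
  have heq : (fun s => derivWithin h I s) =ᶠ[𝓝 x] deriv h := by
    filter_upwards [Ioo_mem_nhds (by linarith : x - 1 < x) (by linarith : x < x + 1)] with s hs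
    exact derivWithin_of_mem_nhds (Icc_mem_nhds hs.1 hs.2)
  calc deriv (deriv h) x = derivWithin (fun s => derivWithin h I s) I x := by
        rw [derivWithin_of_mem_nhds hI, heq.deriv_eq]
    _ ≤ 0 := hkey

/-- Boundedness of the image of a continuous, periodic-in-φ function on a strip. -/
lemma mp_bddAbove {a b : ℝ} (u : ℝ → ℝ → ℝ)
    (hu : ContinuousOn (fun p : ℝ × ℝ => u p.1 p.2) (Icc a b ×ˢ (univ : Set ℝ)))
    (hper : ∀ ρ φ, u ρ (φ + 2 * Real.pi) = u ρ φ) :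
    BddAbove ((fun p : ℝ × ℝ => u p.1 p.2) '' (Icc a b ×ˢ (univ : Set ℝ))) := by
  have hcomp : IsCompact (Icc a b ×ˢ Icc (0:ℝ) (2 * Real.pi)) :=
    isCompact_Icc.prod isCompact_Icc
  have hK : BddAbove ((fun p : ℝ × ℝ => u p.1 p.2) '' (Icc a b ×ˢ Icc (0:ℝ) (2 * Real.pi))) :=
    (hcomp.image_of_continuousOn (hu.mono (fun p hp => ⟨hp.1, mem_univ _⟩))).bddAbove
  obtain ⟨C, hC⟩ := hK
  refine ⟨C, ?_⟩
  rintro _ ⟨⟨ρ, φ⟩, ⟨hρ, -⟩, rfl⟩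
  have hper' : Function.Periodic (u ρ) (2 * Real.pi) := fun y => hper ρ y
  obtain ⟨ψ, hψ, hval⟩ := hper'.exists_mem_Ico₀ (by positivity) φ
  have : u ρ ψ ≤ C := hC ⟨(ρ, ψ), ⟨hρ, ⟨hψ.1, hψ.2.le⟩⟩, rfl⟩
  simpa [hval] using this

/-- Maximum principle for the two-dimensional operator with transmission conditions. -/
theorem maximum_principle_transmission_2D
    (r R κ α β : ℝ) (hr : 0 < r) (hr1 : r < 1) (hR : 1 < R) (hκ : 0 < κ)
    (hα : 0 ≤ α) (hβ : 0 ≤ β)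
    (um up : ℝ → ℝ → ℝ)
    (hum : ContDiffOn ℝ 2 (fun p : ℝ × ℝ => um p.1 p.2) (Icc r 1 ×ˢ (univ : Set ℝ)))
    (hup : ContDiffOn ℝ 2 (fun p : ℝ × ℝ => up p.1 p.2) (Icc 1 R ×ˢ (univ : Set ℝ)))
    (humper : ∀ ρ φ, um ρ (φ + 2 * Real.pi) = um ρ φ)
    (hupper : ∀ ρ φ, up ρ (φ + 2 * Real.pi) = up ρ φ)
    (hbcm : ∀ φ : ℝ, pdR r 1 um r φ = 0)
    (hbcp : ∀ φ : ℝ, pdR 1 R up R φ = 0)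
    (htrp : ∀ φ : ℝ, pdR 1 R up 1 φ = α * (up 1 φ - um 1 φ))
    (htrm : ∀ φ : ℝ, pdR r 1 um 1 φ = β * (up 1 φ - um 1 φ))
    (M : ℝ)
    (hM : M = max
        (sSup ((fun p : ℝ × ℝ => um p.1 p.2) '' (Icc r 1 ×ˢ (univ : Set ℝ))))
        (sSup ((fun p : ℝ × ℝ => up p.1 p.2) '' (Icc 1 R ×ˢ (univ : Set ℝ))))) :
    (∀ ρ₀ φ₀ : ℝ, ρ₀ ∈ Icc r 1 → um ρ₀ φ₀ = M →
      κ * (pdRR r 1 um ρ₀ φ₀ + ρ₀⁻¹ * pdR r 1 um ρ₀ φ₀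
            + (ρ₀ ^ 2)⁻¹ * pdPP um ρ₀ φ₀) ≤ 0) ∧
    (∀ ρ₀ φ₀ : ℝ, ρ₀ ∈ Icc 1 R → up ρ₀ φ₀ = M →
      pdRR 1 R up ρ₀ φ₀ + ρ₀⁻¹ * pdR 1 R up ρ₀ φ₀
        + (ρ₀ ^ 2)⁻¹ * pdPP up ρ₀ φ₀ ≤ 0) := by
  -- bounds
  have hbm := mp_bddAbove um hum.continuousOn humper
  have hbp := mp_bddAbove up hup.continuousOn hupper
  have hMm : ∀ ρ ∈ Icc r 1, ∀ φ, um ρ φ ≤ M := fun ρ hρ φ => by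
    rw [hM]
    exact le_trans (le_csSup hbm ⟨(ρ, φ), ⟨hρ, mem_univ _⟩, rfl⟩) (le_max_left _ _)
  have hMp : ∀ ρ ∈ Icc 1 R, ∀ φ, up ρ φ ≤ M := fun ρ hρ φ => by
    rw [hM]
    exact le_trans (le_csSup hbp ⟨(ρ, φ), ⟨hρ, mem_univ _⟩, rfl⟩) (le_max_right _ _)
  -- sections are smooth
  have hgm : ∀ φ, ContDiffOn ℝ 2 (fun s => um s φ) (Icc r 1) := fun φ =>
    hum.comp (contDiff_id.prodMk contDiff_const).contDiffOn (fun s hs => ⟨hs, mem_univ _⟩)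
  have hgp : ∀ φ, ContDiffOn ℝ 2 (fun s => up s φ) (Icc 1 R) := fun φ =>
    hup.comp (contDiff_id.prodMk contDiff_const).contDiffOn (fun s hs => ⟨hs, mem_univ _⟩)
  have hhm : ∀ ρ ∈ Icc r 1, ContDiff ℝ 2 (um ρ) := fun ρ hρ => by
    rw [← contDiffOn_univ]
    exact hum.comp (contDiff_const.prodMk contDiff_id).contDiffOn (fun φ _ => ⟨hρ, mem_univ _⟩)
  have hhp : ∀ ρ ∈ Icc 1 R, ContDiff ℝ 2 (up ρ) := fun ρ hρ => by
    rw [← contDiffOn_univ]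
    exact hup.comp (contDiff_const.prodMk contDiff_id).contDiffOn (fun φ _ => ⟨hρ, mem_univ _⟩)
  constructor
  · -- inner annulus
    intro ρ₀ φ₀ hρ₀ hval
    have hmax : ∀ y ∈ Icc r 1, um y φ₀ ≤ um ρ₀ φ₀ := fun y hy => by
      rw [hval]; exact hMm y hy φ₀
    have h2 : pdR r 1 um ρ₀ φ₀ = 0 := by
      refine mp_first_deriv_zero hr1 (hgm φ₀) hρ₀ hmax ?_ ?_
      · intro hxa
        subst hxa
        exact le_of_eq (hbcm φ₀).symm
      · intro hxb
        subst hxb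
        rw [show derivWithin (fun s => um s φ₀) (Icc r 1) 1 = pdR r 1 um 1 φ₀ from rfl,
          htrm φ₀]
        have h1 : up 1 φ₀ - um 1 φ₀ ≤ 0 := by
          have := hMp 1 (left_mem_Icc.2 hR.le) φ₀
          rw [← hval] at this; linarith
        exact mul_nonpos_of_nonneg_of_nonpos hβ h1
    have h1 : pdRR r 1 um ρ₀ φ₀ ≤ 0 :=
      mp_second_deriv_nonpos hr1 (hgm φ₀) hρ₀ hmax h2
    have h3 : pdPP um ρ₀ φ₀ ≤ 0 := by
      refine mp_second_deriv_nonpos_univ (hhm ρ₀ hρ₀) (fun y => ?_)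
      rw [hval]; exact hMm ρ₀ hρ₀ y
    have h4 : (ρ₀ ^ 2)⁻¹ * pdPP um ρ₀ φ₀ ≤ 0 :=
      mul_nonpos_of_nonneg_of_nonpos (inv_nonneg.2 (sq_nonneg _)) h3
    rw [h2]
    refine mul_nonpos_of_nonneg_of_nonpos hκ.le (by linarith)
  · -- outer annulus
    intro ρ₀ φ₀ hρ₀ hval
    have hmax : ∀ y ∈ Icc 1 R, up y φ₀ ≤ up ρ₀ φ₀ := fun y hy => by
      rw [hval]; exact hMp y hy φ₀
    have h2 : pdR 1 R up ρ₀ φ₀ = 0 := by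
      refine mp_first_deriv_zero hR (hgp φ₀) hρ₀ hmax ?_ ?_
      · intro hxa
        subst hxa
        rw [show derivWithin (fun s => up s φ₀) (Icc 1 R) 1 = pdR 1 R up 1 φ₀ from rfl,
          htrp φ₀]
        have h1 : 0 ≤ up 1 φ₀ - um 1 φ₀ := by
          have := hMm 1 (right_mem_Icc.2 hr1.le) φ₀
          rw [← hval] at this; linarith
        exact mul_nonneg hα h1
      · intro hxb
        subst hxb
        exact le_of_eq (hbcp φ₀)
    have h1 : pdRR 1 R up ρ₀ φ₀ ≤ 0 :=
      mp_second_deriv_nonpos hR (hgp φ₀) hρ₀ hmax h2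
    have h3 : pdPP up ρ₀ φ₀ ≤ 0 := by
      refine mp_second_deriv_nonpos_univ (hhp ρ₀ hρ₀) (fun y => ?_)
      rw [hval]; exact hMp ρ₀ hρ₀ y
    have h4 : (ρ₀ ^ 2)⁻¹ * pdPP up ρ₀ φ₀ ≤ 0 :=
      mul_nonpos_of_nonneg_of_nonpos (inv_nonneg.2 (sq_nonneg _)) h3
    rw [h2]
    linarith
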